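/- Let h₀*, h₁* ∈ H minimize the ℓ₂ risks L_s^{(2)}(h) = sqrt(E_{X∼P_s}[(h(X) − y_s(X))²]). Then the ℓ₂ benefit-of-splitting ε_split^{(2)} = inf_{h∈H} max_s L_s^{(2)}(h) − max_s inf_{h∈H} L_s^{(2)}(h) satisfies ε_split^{(2)} ≤ min_{s∈{0,1}} sqrt(E_{X∼P_s}[(h₁*(X) − h₀*(X))²]). -/

import Mathlib

open MeasureTheory

/-- Group risk under ℓ₂ loss: `L^{(2)}(h) = sqrt(E_{X∼P}[(h(X) − y(X))²])`. -/
noncomputable def risk2 {X : Type*} [MeasurableSpace X]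
    (P : Measure X) (y h : X → ℝ) : ℝ := Real.sqrt (∫ x, (h x - y x) ^ 2 ∂P)

/-- Benefit-of-splitting under ℓ₂ risk. -/
noncomputable def benefitOfSplitting2 {X : Type*} [MeasurableSpace X]
    (P₀ P₁ : Measure X) (y₀ y₁ : X → ℝ) (H : Set (X → ℝ)) : ℝ :=
  sInf ((fun h => max (risk2 P₀ y₀ h) (risk2 P₁ y₁ h)) '' H)
    - max (sInf (risk2 P₀ y₀ '' H)) (sInf (risk2 P₁ y₁ '' H))

lemma sqrt_integral_sq_eq {X : Type*} [MeasurableSpace X] {μ : Measure X} {f : X → ℝ}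
    (hf : MemLp f 2 μ) :
    Real.sqrt (∫ x, (f x) ^ 2 ∂μ) = (eLpNorm f 2 μ).toReal := by
  rw [hf.eLpNorm_eq_integral_rpow_norm two_ne_zero ENNReal.ofNat_ne_top]
  rw [ENNReal.toReal_ofReal (by positivity)]
  have : ∀ x, ‖f x‖ ^ (ENNReal.toReal 2) = (f x) ^ 2 := by
    intro x
    rw [ENNReal.toReal_ofNat, Real.rpow_two, Real.norm_eq_abs, sq_abs]
  simp_rw [this]
  rw [Real.sqrt_eq_rpow, ENNReal.toReal_ofNat]
  norm_num

lemma sqrt_sq_triangle {X : Type*} [MeasurableSpace X] {μ : Measure X} {f g : X → ℝ}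
    (hf : MemLp f 2 μ) (hg : MemLp g 2 μ) :
    Real.sqrt (∫ x, (f x + g x) ^ 2 ∂μ) ≤
      Real.sqrt (∫ x, (f x) ^ 2 ∂μ) + Real.sqrt (∫ x, (g x) ^ 2 ∂μ) := by
  have h1 := sqrt_integral_sq_eq (hf.add hg)
  simp only [Pi.add_apply] at h1
  rw [h1, sqrt_integral_sq_eq hf, sqrt_integral_sq_eq hg,
    ← ENNReal.toReal_add hf.eLpNorm_ne_top hg.eLpNorm_ne_top]
  exact ENNReal.toReal_mono (by simp [hf.eLpNorm_ne_top, hg.eLpNorm_ne_top, ENNReal.add_ne_top])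
    (eLpNorm_add_le hf.aestronglyMeasurable hg.aestronglyMeasurable one_le_two)

/-- triangle for risk2: L(a) ≤ L(b) + ‖a-b‖ -/
lemma risk2_triangle {X : Type*} [MeasurableSpace X] {P : Measure X} [IsProbabilityMeasure P]
    {y a b : X → ℝ} (hy : Measurable y) (hy01 : ∀ x, y x ∈ Set.Icc (0:ℝ) 1)
    (ha : Measurable a) (ha01 : ∀ x, a x ∈ Set.Icc (0:ℝ) 1)
    (hb : Measurable b) (hb01 : ∀ x, b x ∈ Set.Icc (0:ℝ) 1) :
    risk2 P y a ≤ risk2 P y b + Real.sqrt (∫ x, (a x - b x) ^ 2 ∂P) := by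
  have mem : ∀ (u v : X → ℝ), Measurable u → (∀ x, u x ∈ Set.Icc (0:ℝ) 1) →
      Measurable v → (∀ x, v x ∈ Set.Icc (0:ℝ) 1) →
      MemLp (fun x => u x - v x) 2 P := by
    intro u v hu hu01 hv hv01
    refine memLp_of_bounded (a := -1) (b := 1) (Filter.Eventually.of_forall fun x => ?_)
      ((hu.sub hv).aestronglyMeasurable) 2
    rw [Pi.sub_apply]
    constructor
    · nlinarith [(hu01 x).1, (hu01 x).2, (hv01 x).1, (hv01 x).2]
    · nlinarith [(hu01 x).1, (hu01 x).2, (hv01 x).1, (hv01 x).2]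
  have key := sqrt_sq_triangle (mem b y hb hb01 hy hy01) (mem a b ha ha01 hb hb01)
  have : ∀ x, (b x - y x + (a x - b x)) ^ 2 = (a x - y x) ^ 2 := fun x => by ring
  simp_rw [this] at key
  exact key

theorem benefitOfSplitting2_upper_bound {X : Type*} [MeasurableSpace X]
    (P₀ P₁ : Measure X) [IsProbabilityMeasure P₀] [IsProbabilityMeasure P₁]
    (y₀ y₁ : X → ℝ) (hy₀ : Measurable y₀) (hy₁ : Measurable y₁)
    (hy₀01 : ∀ x, y₀ x ∈ Set.Icc (0:ℝ) 1) (hy₁01 : ∀ x, y₁ x ∈ Set.Icc (0:ℝ) 1)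
    (H : Set (X → ℝ))
    (hHmeas : ∀ h ∈ H, Measurable h ∧ ∀ x, h x ∈ Set.Icc (0:ℝ) 1)
    (h₀ h₁ : X → ℝ) (h₀H : h₀ ∈ H) (h₁H : h₁ ∈ H)
    (h₀_opt : ∀ h ∈ H, risk2 P₀ y₀ h₀ ≤ risk2 P₀ y₀ h)
    (h₁_opt : ∀ h ∈ H, risk2 P₁ y₁ h₁ ≤ risk2 P₁ y₁ h) :
    benefitOfSplitting2 P₀ P₁ y₀ y₁ H ≤
      min (Real.sqrt (∫ x, (h₁ x - h₀ x) ^ 2 ∂P₀))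
          (Real.sqrt (∫ x, (h₁ x - h₀ x) ^ 2 ∂P₁)) := by
  obtain ⟨hm₀, hb₀⟩ := hHmeas h₀ h₀H
  obtain ⟨hm₁, hb₁⟩ := hHmeas h₁ h₁H
  set c₀ := Real.sqrt (∫ x, (h₁ x - h₀ x) ^ 2 ∂P₀) with hc₀
  set c₁ := Real.sqrt (∫ x, (h₁ x - h₀ x) ^ 2 ∂P₁) with hc₁
  have e0 : sInf (risk2 P₀ y₀ '' H) = risk2 P₀ y₀ h₀ :=
    IsLeast.csInf_eq ⟨⟨h₀, h₀H, rfl⟩, by rintro r ⟨h, hH, rfl⟩; exact h₀_opt h hH⟩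
  have e1 : sInf (risk2 P₁ y₁ '' H) = risk2 P₁ y₁ h₁ :=
    IsLeast.csInf_eq ⟨⟨h₁, h₁H, rfl⟩, by rintro r ⟨h, hH, rfl⟩; exact h₁_opt h hH⟩
  have bdd : BddBelow ((fun h => max (risk2 P₀ y₀ h) (risk2 P₁ y₁ h)) '' H) := by
    refine ⟨0, ?_⟩
    rintro r ⟨h, hH, rfl⟩
    exact le_trans (Real.sqrt_nonneg _) (le_max_left _ _)
  have swap : ∀ (μ : Measure X), (∫ x, (h₀ x - h₁ x) ^ 2 ∂μ) = ∫ x, (h₁ x - h₀ x) ^ 2 ∂μ := by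
    intro μ; congr 1; funext x; ring
  -- bound via h₀ as candidate
  have bound1 : benefitOfSplitting2 P₀ P₁ y₀ y₁ H ≤ c₁ := by
    have tri : risk2 P₁ y₁ h₀ ≤ risk2 P₁ y₁ h₁ + c₁ := by
      have := risk2_triangle (P := P₁) hy₁ hy₁01 hm₀ hb₀ hm₁ hb₁
      rwa [swap P₁] at this
    have hA : sInf ((fun h => max (risk2 P₀ y₀ h) (risk2 P₁ y₁ h)) '' H)
        ≤ max (risk2 P₀ y₀ h₀) (risk2 P₁ y₁ h₀) := csInf_le bdd ⟨h₀, h₀H, rfl⟩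
    have hc₁0 : 0 ≤ c₁ := Real.sqrt_nonneg _
    have : max (risk2 P₀ y₀ h₀) (risk2 P₁ y₁ h₀)
        ≤ max (risk2 P₀ y₀ h₀) (risk2 P₁ y₁ h₁) + c₁ := by
      apply max_le
      · exact le_add_of_le_of_nonneg (le_max_left _ _) hc₁0
      · exact le_trans tri (add_le_add (le_max_right _ _) le_rfl)
    unfold benefitOfSplitting2
    rw [e0, e1]
    linarith
  have bound0 : benefitOfSplitting2 P₀ P₁ y₀ y₁ H ≤ c₀ := by
    have tri : risk2 P₀ y₀ h₁ ≤ risk2 P₀ y₀ h₀ + c₀ :=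
      risk2_triangle (P := P₀) hy₀ hy₀01 hm₁ hb₁ hm₀ hb₀
    have hA : sInf ((fun h => max (risk2 P₀ y₀ h) (risk2 P₁ y₁ h)) '' H)
        ≤ max (risk2 P₀ y₀ h₁) (risk2 P₁ y₁ h₁) := csInf_le bdd ⟨h₁, h₁H, rfl⟩
    have hc₀0 : 0 ≤ c₀ := Real.sqrt_nonneg _
    have : max (risk2 P₀ y₀ h₁) (risk2 P₁ y₁ h₁)
        ≤ max (risk2 P₀ y₀ h₀) (risk2 P₁ y₁ h₁) + c₀ := by
      apply max_le
      · exact le_trans tri (add_le_add (le_max_left _ _) le_rfl)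
      · exact le_add_of_le_of_nonneg (le_max_right _ _) hc₀0
    unfold benefitOfSplitting2
    rw [e0, e1]
    linarith
  exact le_min bound0 bound1
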